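/- For nonzero vectors x, y, z in a finite-dimensional real or complex inner product space, |cos²(θ(x,z)) − cos²(θ(y,z))| ≤ sin(θ(x,y)). -/

import Mathlib

open scoped InnerProductSpace

/-- The acute angle between two vectors of an inner product space over `𝕜 = ℝ` or `ℂ`:
`θ(x,y) = arccos (|(x,y)| / (‖x‖‖y‖)) ∈ [0, π/2]`. -/
noncomputable def acuteAngle (𝕜 : Type*) {H : Type*} [RCLike 𝕜] [NormedAddCommGroup H]
    [InnerProductSpace 𝕜 H] (x y : H) : ℝ :=
  Real.arccos (‖(inner 𝕜 x y : 𝕜)‖ / (‖x‖ * ‖y‖))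

section Key

open RCLike

variable {𝕜 H : Type*} [RCLike 𝕜] [NormedAddCommGroup H] [InnerProductSpace 𝕜 H]

local notation "⟪" x ", " y "⟫" => @inner 𝕜 _ _ x y

private lemma key_ineq (u v w : H) (hu : ‖u‖ = 1) (hv : ‖v‖ = 1) :
    ‖⟪u, w⟫‖ ≤ ‖⟪u, v⟫‖ * ‖⟪v, w⟫‖ +
      Real.sqrt (1 - ‖⟪u, v⟫‖ ^ 2) * Real.sqrt (‖w‖ ^ 2 - ‖⟪v, w⟫‖ ^ 2) := by
  set u' := u - ⟪v, u⟫ • v with hu'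
  set w' := w - ⟪v, w⟫ • v with hw'
  have hvv : ⟪v, v⟫ = 1 := by
    rw [inner_self_eq_norm_sq_to_K, hv]; norm_num
  have hvu' : ⟪v, u'⟫ = 0 := by
    simp [hu', inner_sub_right, inner_smul_right, hvv, hv]
  have hvw' : ⟪v, w'⟫ = 0 := by
    simp [hw', inner_sub_right, inner_smul_right, hvv, hv]
  have hdecomp : ⟪u, w⟫ = ⟪u, v⟫ * ⟪v, w⟫ + ⟪u', w'⟫ := by
    have : ⟪u', w'⟫ = ⟪u, w⟫ - ⟪u, v⟫ * ⟪v, w⟫ := by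
      simp [hu', hw', inner_sub_left, inner_sub_right, inner_smul_left, inner_smul_right,
        hvv, inner_conj_symm, hv]
    rw [this]; ring
  have hnu' : ‖u'‖ ^ 2 = 1 - ‖⟪u, v⟫‖ ^ 2 := by
    have pyth : ‖u' + ⟪v, u⟫ • v‖ ^ 2 = ‖u'‖ ^ 2 + 2 * re ⟪u', ⟪v, u⟫ • v⟫ + ‖⟪v, u⟫ • v‖ ^ 2 :=
      norm_add_sq _ _
    have hz : ⟪u', v⟫ = 0 := by rw [← inner_conj_symm, hvu']; simp
    have h0 : ⟪u', ⟪v, u⟫ • v⟫ = 0 := by rw [inner_smul_right, hz, mul_zero]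
    have h1 : u' + ⟪v, u⟫ • v = u := by simp [hu']
    rw [h1, h0, hu] at pyth
    simp [norm_smul, hv, norm_inner_symm v u] at pyth
    nlinarith [pyth]
  have hnw' : ‖w'‖ ^ 2 = ‖w‖ ^ 2 - ‖⟪v, w⟫‖ ^ 2 := by
    have pyth : ‖w' + ⟪v, w⟫ • v‖ ^ 2 = ‖w'‖ ^ 2 + 2 * re ⟪w', ⟪v, w⟫ • v⟫ + ‖⟪v, w⟫ • v‖ ^ 2 :=
      norm_add_sq _ _
    have hz : ⟪w', v⟫ = 0 := by rw [← inner_conj_symm, hvw']; simp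
    have h0' : ⟪w', ⟪v, w⟫ • v⟫ = 0 := by rw [inner_smul_right, hz, mul_zero]
    have h1 : w' + ⟪v, w⟫ • v = w := by simp [hw']
    rw [h1, h0'] at pyth
    simp [norm_smul, hv] at pyth
    nlinarith [pyth]
  calc ‖⟪u, w⟫‖ ≤ ‖⟪u, v⟫ * ⟪v, w⟫‖ + ‖⟪u', w'⟫‖ := by rw [hdecomp]; exact norm_add_le _ _
    _ ≤ ‖⟪u, v⟫‖ * ‖⟪v, w⟫‖ + ‖u'‖ * ‖w'‖ := by
        rw [norm_mul]
        exact add_le_add le_rfl (norm_inner_le_norm _ _)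
    _ = ‖⟪u, v⟫‖ * ‖⟪v, w⟫‖ + Real.sqrt (1 - ‖⟪u, v⟫‖ ^ 2) * Real.sqrt (‖w‖ ^ 2 - ‖⟪v, w⟫‖ ^ 2) := by
        rw [← hnu', ← hnw', Real.sqrt_sq (norm_nonneg _), Real.sqrt_sq (norm_nonneg _)]

end Key

private lemma alg_half (A B T s sB : ℝ) (hB0 : 0 ≤ B) (hT0 : 0 ≤ T) (hs0 : 0 ≤ s)
    (hsB0 : 0 ≤ sB) (hs : s ^ 2 = 1 - T ^ 2) (hsB : sB ^ 2 = 1 - B ^ 2)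
    (hA0 : 0 ≤ A) (h1 : A ≤ T * B + s * sB) : A ^ 2 - B ^ 2 ≤ s := by
  have hR : 0 ≤ T * B + s * sB := by positivity
  have hsq : A ^ 2 ≤ (T * B + s * sB) ^ 2 := by nlinarith [mul_le_mul h1 h1 hA0 hR]
  set E := s * (1 - 2 * B ^ 2) + 2 * T * B * sB with hE_def
  have hident : E ^ 2 + (s * (2 * B * sB) - T * (1 - 2 * B ^ 2)) ^ 2
      = (s ^ 2 + T ^ 2) * ((1 - 2 * B ^ 2) ^ 2 + 4 * B ^ 2 * sB ^ 2) := by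
    rw [hE_def]; ring
  have hone : (s ^ 2 + T ^ 2) * ((1 - 2 * B ^ 2) ^ 2 + 4 * B ^ 2 * sB ^ 2) = 1 := by
    rw [hs, hsB]; ring
  have hE2 : E ^ 2 ≤ 1 := by
    rw [hone] at hident
    nlinarith [sq_nonneg (s * (2 * B * sB) - T * (1 - 2 * B ^ 2))]
  have hE1 : E ≤ 1 := by nlinarith [sq_nonneg (E - 1)]
  have hsE : s * E ≤ s := by nlinarith [mul_nonneg hs0 (sub_nonneg.mpr hE1)]
  nlinarith [hsq, hsE]

/-- For nonzero vectors `x, y, z` in a finite-dimensional real or complex inner product space,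
`|cos² θ(x,z) − cos² θ(y,z)| ≤ sin θ(x,y)`. -/
theorem cos_sq_angle_diff_le {𝕜 H : Type*} [RCLike 𝕜] [NormedAddCommGroup H]
    [InnerProductSpace 𝕜 H] [FiniteDimensional 𝕜 H]
    (x y z : H) (hx : x ≠ 0) (hy : y ≠ 0) (hz : z ≠ 0) :
    |Real.cos (acuteAngle 𝕜 x z) ^ 2 - Real.cos (acuteAngle 𝕜 y z) ^ 2| ≤
      Real.sin (acuteAngle 𝕜 x y) := by
  have hxn : (0:ℝ) < ‖x‖ := norm_pos_iff.mpr hx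
  have hyn : (0:ℝ) < ‖y‖ := norm_pos_iff.mpr hy
  have hzn : (0:ℝ) < ‖z‖ := norm_pos_iff.mpr hz
  set u : H := ((‖x‖ : 𝕜))⁻¹ • x with hu_def
  set v : H := ((‖y‖ : 𝕜))⁻¹ • y with hv_def
  set w : H := ((‖z‖ : 𝕜))⁻¹ • z with hw_def
  have hnu : ‖u‖ = 1 := by
    rw [hu_def, norm_smul, norm_inv, RCLike.norm_ofReal, abs_of_pos hxn, inv_mul_cancel₀ hxn.ne']
  have hnv : ‖v‖ = 1 := by
    rw [hv_def, norm_smul, norm_inv, RCLike.norm_ofReal, abs_of_pos hyn, inv_mul_cancel₀ hyn.ne']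
  have hnw : ‖w‖ = 1 := by
    rw [hw_def, norm_smul, norm_inv, RCLike.norm_ofReal, abs_of_pos hzn, inv_mul_cancel₀ hzn.ne']
  have hinner : ∀ a b : H, (0:ℝ) < ‖a‖ → (0:ℝ) < ‖b‖ →
      ‖(inner 𝕜 (((‖a‖:𝕜))⁻¹ • a) (((‖b‖:𝕜))⁻¹ • b) : 𝕜)‖ = ‖(inner 𝕜 a b : 𝕜)‖ / (‖a‖ * ‖b‖) := by
    intro a b ha hb
    simp only [inner_smul_left, inner_smul_right, norm_mul, map_inv₀, norm_inv,
      RCLike.norm_conj, RCLike.norm_ofReal, abs_of_pos ha, abs_of_pos hb]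
    rw [div_eq_mul_inv, mul_inv]
    ring
  -- cosines
  have hcos : ∀ a b : H, (0:ℝ) < ‖a‖ → (0:ℝ) < ‖b‖ →
      Real.cos (acuteAngle 𝕜 a b) =
        ‖(inner 𝕜 (((‖a‖:𝕜))⁻¹ • a) (((‖b‖:𝕜))⁻¹ • b) : 𝕜)‖ := by
    intro a b ha hb
    rw [acuteAngle, Real.cos_arccos, hinner a b ha hb]
    · exact le_trans (by norm_num) (div_nonneg (norm_nonneg _) (by positivity))
    · rw [div_le_one (by positivity)]; exact norm_inner_le_norm a b
  have hAx := hcos x z hxn hzn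
  have hBy := hcos y z hyn hzn
  have hTxy := hcos x y hxn hyn
  set A := ‖(inner 𝕜 u w : 𝕜)‖ with hA_def
  set B := ‖(inner 𝕜 v w : 𝕜)‖ with hB_def
  set T := ‖(inner 𝕜 u v : 𝕜)‖ with hT_def
  have hsin : Real.sin (acuteAngle 𝕜 x y) = Real.sqrt (1 - T ^ 2) := by
    rw [acuteAngle, Real.sin_arccos, hT_def, hu_def, hv_def, hinner x y hxn hyn]
  have hA1 : A ≤ 1 := by
    rw [hA_def]; calc ‖(inner 𝕜 u w : 𝕜)‖ ≤ ‖u‖ * ‖w‖ := norm_inner_le_norm u w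
      _ = 1 := by rw [hnu, hnw]; ring
  have hB1 : B ≤ 1 := by
    rw [hB_def]; calc ‖(inner 𝕜 v w : 𝕜)‖ ≤ ‖v‖ * ‖w‖ := norm_inner_le_norm v w
      _ = 1 := by rw [hnv, hnw]; ring
  have hT1 : T ≤ 1 := by
    rw [hT_def]; calc ‖(inner 𝕜 u v : 𝕜)‖ ≤ ‖u‖ * ‖v‖ := norm_inner_le_norm u v
      _ = 1 := by rw [hnu, hnv]; ring
  have key1 : A ≤ T * B + Real.sqrt (1 - T ^ 2) * Real.sqrt (1 - B ^ 2) := by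
    have := key_ineq (𝕜 := 𝕜) u v w hnu hnv
    rwa [hnw, one_pow] at this
  have key2 : B ≤ T * A + Real.sqrt (1 - T ^ 2) * Real.sqrt (1 - A ^ 2) := by
    have := key_ineq (𝕜 := 𝕜) v u w hnv hnu
    rw [hnw, one_pow, ← hB_def, ← hA_def, norm_inner_symm v u, ← hT_def] at this
    exact this
  rw [hAx, hBy, hsin]
  set s := Real.sqrt (1 - T ^ 2) with hs_def
  set sA := Real.sqrt (1 - A ^ 2) with hsA_def
  set sB := Real.sqrt (1 - B ^ 2) with hsB_def
  have hs2 : s ^ 2 = 1 - T ^ 2 := Real.sq_sqrt (by nlinarith [norm_nonneg (inner 𝕜 u v : 𝕜)])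
  have hsA2 : sA ^ 2 = 1 - A ^ 2 := Real.sq_sqrt (by nlinarith [norm_nonneg (inner 𝕜 u w : 𝕜)])
  have hsB2 : sB ^ 2 = 1 - B ^ 2 := Real.sq_sqrt (by nlinarith [norm_nonneg (inner 𝕜 v w : 𝕜)])
  rw [abs_sub_le_iff]
  constructor
  · exact alg_half A B T s sB (norm_nonneg _) (norm_nonneg _) (Real.sqrt_nonneg _)
      (Real.sqrt_nonneg _) hs2 hsB2 (norm_nonneg _) key1
  · exact alg_half B A T s sA (norm_nonneg _) (norm_nonneg _) (Real.sqrt_nonneg _)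
      (Real.sqrt_nonneg _) hs2 hsA2 (norm_nonneg _) key2
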